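/- Let n ≥ 2 be an integer and ν₁ = n − 1. If T is a real random variable distributed according to the Student t distribution with ν₁ degrees of freedom, then E[{n log(1 + T²/ν₁)}²] = n²{D(ν₁)² − 2D'(ν₁)}; consequently, writing m₁ = n D(ν₁) and m₂ = n²{D(ν₁)² − 2D'(ν₁)}, the variance of n log(1 + T²/ν₁) equals m₂ − m₁². -/

import Mathlib

open Real MeasureTheory

/-- `K ν = Γ((ν+1)/2) / (√(πν) Γ(ν/2))`. -/
noncomputable def Kfun (ν : ℝ) : ℝ :=
  Real.Gamma ((ν + 1) / 2) / (Real.sqrt (Real.pi * ν) * Real.Gamma (ν / 2))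

/-- Density of the Student t distribution with `ν` degrees of freedom. -/
noncomputable def tDensity (ν : ℝ) (t : ℝ) : ℝ :=
  Kfun ν * (1 + t ^ 2 / ν) ^ (-((ν + 1) / 2))

/-- The digamma function `Ψ(x) = d/dx log Γ(x)`. -/
noncomputable def digamma (x : ℝ) : ℝ :=
  deriv (fun y => Real.log (Real.Gamma y)) x

/-- `D(ν) = Ψ((ν+1)/2) − Ψ(ν/2)`. -/
noncomputable def Dfun (ν : ℝ) : ℝ :=
  digamma ((ν + 1) / 2) - digamma (ν / 2)


open Set Filter Topology

lemma gamma_contDiffAt {x : ℝ} (hx : 0 < x) : ContDiffAt ℝ ⊤ Real.Gamma x := by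
  have hopen : IsOpen {z : ℂ | 0 < z.re} := isOpen_lt continuous_const Complex.continuous_re
  have h1 : AnalyticOnNhd ℂ Complex.Gamma {z : ℂ | 0 < z.re} := by
    refine DifferentiableOn.analyticOnNhd (fun z hz => ?_) hopen
    refine (Complex.differentiableAt_Gamma z (fun m => ?_)).differentiableWithinAt
    intro h
    rw [h] at hz
    simp only [mem_setOf_eq, Complex.neg_re, Complex.natCast_re] at hz
    have : (0:ℝ) ≤ m := Nat.cast_nonneg m
    linarith
  have h2 : AnalyticAt ℝ Complex.Gamma (x : ℂ) :=
    (h1 (x : ℂ) (by simpa using hx)).restrictScalars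
  have h3 : AnalyticAt ℝ (fun y : ℝ => (Complex.Gamma (y : ℂ)).re) x := by
    have hre := (Complex.reCLM.analyticAt (Complex.Gamma (x : ℂ)))
    have hof := (Complex.ofRealCLM.analyticAt x)
    have h23 : AnalyticAt ℝ (Complex.Gamma ∘ ⇑Complex.ofRealCLM) x := h2.comp hof
    have hre' : AnalyticAt ℝ (⇑Complex.reCLM) ((Complex.Gamma ∘ ⇑Complex.ofRealCLM) x) := by
      exact Complex.reCLM.analyticAt _
    have h3 : AnalyticAt ℝ (⇑Complex.reCLM ∘ Complex.Gamma ∘ ⇑Complex.ofRealCLM) x :=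
      hre'.comp h23
    simpa [Function.comp_def] using h3
  have h4 : Real.Gamma = fun y : ℝ => (Complex.Gamma (y : ℂ)).re := by
    funext y
    rw [Complex.Gamma_ofReal, Complex.ofReal_re]
  rw [h4]
  exact h3.contDiffAt

lemma logGamma_contDiffOn : ContDiffOn ℝ ⊤ (fun y => Real.log (Real.Gamma y)) (Ioi 0) := by
  intro x hx
  have hx' : (0:ℝ) < x := hx
  exact ((gamma_contDiffAt hx').log (Real.Gamma_pos_of_pos hx').ne').contDiffWithinAt

lemma digamma_contDiffOn : ContDiffOn ℝ ⊤ digamma (Ioi 0) :=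
  logGamma_contDiffOn.deriv_of_isOpen isOpen_Ioi le_top

lemma digamma_diffAt {x : ℝ} (hx : 0 < x) : DifferentiableAt ℝ digamma x :=
  ((digamma_contDiffOn.differentiableOn (by simp)).differentiableAt (Ioi_mem_nhds hx))

lemma gamma_ne_neg_nat {x : ℝ} (hx : 0 < x) : ∀ m : ℕ, x ≠ -m := by
  intro m h
  have : (0:ℝ) ≤ m := Nat.cast_nonneg m
  rw [h] at hx; linarith

lemma hasDerivAt_logGamma {x : ℝ} (hx : 0 < x) :
    HasDerivAt (fun y => Real.log (Real.Gamma y)) (digamma x) x :=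
  ((Real.differentiableAt_Gamma (gamma_ne_neg_nat hx)).log
    (Real.Gamma_pos_of_pos hx).ne').hasDerivAt

lemma hasDerivAt_Gamma {x : ℝ} (hx : 0 < x) :
    HasDerivAt Real.Gamma (digamma x * Real.Gamma x) x := by
  have hd := (Real.differentiableAt_Gamma (gamma_ne_neg_nat (x := x) hx)).hasDerivAt
  have hlog : HasDerivAt (fun y => Real.log (Real.Gamma y))
      (deriv Real.Gamma x / Real.Gamma x) x := hd.log (Real.Gamma_pos_of_pos hx).ne'
  have h1 : digamma x = deriv Real.Gamma x / Real.Gamma x := hlog.deriv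
  have h2 : digamma x * Real.Gamma x = deriv Real.Gamma x := by
    rw [h1]; field_simp
  rw [h2]; exact hd

lemma hasDerivAt_Dfun {ν : ℝ} (hν : 0 < ν) : HasDerivAt Dfun (deriv Dfun ν) ν := by
  apply DifferentiableAt.hasDerivAt
  have h1 : DifferentiableAt ℝ (fun ν : ℝ => digamma ((ν + 1) / 2)) ν := by
    apply DifferentiableAt.comp (g := digamma) (f := fun ν : ℝ => (ν + 1)/2)
    · exact digamma_diffAt (by positivity)
    · fun_prop
  have h2 : DifferentiableAt ℝ (fun ν : ℝ => digamma (ν / 2)) ν := by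
    apply DifferentiableAt.comp (g := digamma) (f := fun ν : ℝ => ν/2)
    · exact digamma_diffAt (by positivity)
    · fun_prop
  exact h1.sub h2

noncomputable def Hf (ν : ℝ) (s : ℝ) : ℝ :=
  Real.sqrt (Real.pi * ν) * (Real.Gamma (s - 1/2) / Real.Gamma s)

lemma Dfun_two_mul_sub_one (s : ℝ) : Dfun (2*s - 1) = digamma s - digamma (s - 1/2) := by
  unfold Dfun
  norm_num [show (2*s - 1 + 1)/2 = s by ring, show (2*s - 1)/2 = s - 1/2 by ring]

lemma hasDerivAt_Hf {ν s : ℝ} (hs : 1/2 < s) :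
    HasDerivAt (Hf ν) (Hf ν s * (-(Dfun (2*s - 1)))) s := by
  have hs2 : 0 < s - 1/2 := by linarith
  have hs0 : 0 < s := by linarith
  have hA : HasDerivAt (fun u : ℝ => Real.Gamma (u - 1/2))
      (digamma (s - 1/2) * Real.Gamma (s - 1/2)) s := by
    have := (hasDerivAt_Gamma hs2).comp s ((hasDerivAt_id s).sub_const (1/2))
    simpa [Function.comp_def] using this
  have hB := hasDerivAt_Gamma hs0
  have hq := hA.div hB (Real.Gamma_pos_of_pos hs0).ne'
  have := hq.const_mul (Real.sqrt (Real.pi * ν))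
  refine this.congr_deriv ?_
  rw [Dfun_two_mul_sub_one]
  have hG : Real.Gamma s ≠ 0 := (Real.Gamma_pos_of_pos hs0).ne'
  unfold Hf
  field_simp
  ring

noncomputable def H1f (ν : ℝ) (s : ℝ) : ℝ := Hf ν s * (-(Dfun (2*s - 1)))

lemma hasDerivAt_H1f {ν s : ℝ} (hs : 1 ≤ s) :
    HasDerivAt (H1f ν)
      (Hf ν s * ((Dfun (2*s-1))^2 - 2 * deriv Dfun (2*s-1))) s := by
  have hν : 0 < 2*s - 1 := by linarith
  have hD : HasDerivAt (fun u : ℝ => Dfun (2*u - 1)) (2 * deriv Dfun (2*s-1)) s := by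
    have h2 : HasDerivAt (fun u : ℝ => 2*u - 1) 2 s := by
      simpa using ((hasDerivAt_id s).const_mul 2).sub_const 1
    have := (hasDerivAt_Dfun hν).comp s h2
    simpa [mul_comm, Function.comp_def] using this
  have h := (hasDerivAt_Hf (ν := ν) (by linarith : 1/2 < s)).mul hD.neg
  have he : H1f ν = fun y => Hf ν y * (-(Dfun (2*y - 1))) := rfl
  rw [he]
  refine h.congr_deriv ?_
  simp only [Pi.neg_apply]
  ring

noncomputable def wf (ν t : ℝ) : ℝ := 1 + t^2/ν

lemma wf_one_le {ν t : ℝ} (hν : 0 < ν) : 1 ≤ wf ν t :=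
  le_add_of_nonneg_right (by positivity)

lemma wf_pos {ν t : ℝ} (hν : 0 < ν) : 0 < wf ν t := lt_of_lt_of_le one_pos (wf_one_le hν)

lemma log_wf_nonneg {ν t : ℝ} (hν : 0 < ν) : 0 ≤ Real.log (wf ν t) :=
  Real.log_nonneg (wf_one_le hν)

lemma cont_wf (ν : ℝ) : Continuous (wf ν) := by unfold wf; fun_prop

lemma log_le_rpow {x : ℝ} (hx : 1 ≤ x) : Real.log x ≤ 8 * x ^ ((1:ℝ)/8) := by
  have hx0 : 0 < x := by linarith
  have h1 : Real.log (x ^ ((1:ℝ)/8)) = (1/8) * Real.log x := Real.log_rpow hx0 _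
  have h2 : Real.log (x ^ ((1:ℝ)/8)) ≤ x ^ ((1:ℝ)/8) - 1 :=
    Real.log_le_sub_one_of_pos (Real.rpow_pos_of_pos hx0 _)
  nlinarith [Real.rpow_pos_of_pos hx0 ((1:ℝ)/8)]

lemma wf_rpow_le {ν t a b : ℝ} (hν : 0 < ν) (hab : a ≤ b) :
    wf ν t ^ (-b) ≤ wf ν t ^ (-a) :=
  Real.rpow_le_rpow_of_exponent_le (wf_one_le hν) (by linarith)

lemma integrable_wf_rpow {ν a : ℝ} (hν : 1 ≤ ν) (ha : 1/2 < a) :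
    Integrable (fun t : ℝ => wf ν t ^ (-a)) := by
  have hν0 : (0:ℝ) < ν := by linarith
  have h0 : Integrable (fun x : ℝ => (1 + ‖x‖^2) ^ (-(2*a)/2)) :=
    integrable_rpow_neg_one_add_norm_sq (E := ℝ) (by simpa using (by linarith : (1:ℝ) < 2*a))
  have h1 : Integrable (fun x : ℝ => (1 + x^2) ^ (-a)) := by
    have : (fun x : ℝ => (1 + ‖x‖^2) ^ (-(2*a)/2)) = fun x : ℝ => (1 + x^2) ^ (-a) := by
      funext x
      rw [Real.norm_eq_abs, sq_abs]
      congr 1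
      ring
    rwa [this] at h0
  have hmeas : AEStronglyMeasurable (fun t : ℝ => wf ν t ^ (-a)) volume := by
    apply Continuous.aestronglyMeasurable
    exact (cont_wf ν).rpow_const (fun t => Or.inl (wf_pos (t := t) hν0).ne')
  refine (h1.const_mul (ν ^ a)).mono hmeas (Filter.Eventually.of_forall (fun t => ?_))
  have hw1 : (1 + t^2)/ν ≤ wf ν t := by
    unfold wf
    rw [div_le_iff₀ hν0]
    have h2 : 0 ≤ t^2 := sq_nonneg t
    have h3 : 0 ≤ t^2/ν := by positivity
    have : t^2/ν * ν = t^2 := div_mul_cancel₀ _ hν0.ne'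
    nlinarith
  have hq : (0:ℝ) < (1 + t^2)/ν := by positivity
  have key : wf ν t ^ (-a) ≤ ((1 + t^2)/ν) ^ (-a) := by
    rw [Real.rpow_neg (wf_pos hν0).le, Real.rpow_neg hq.le]
    apply inv_anti₀ (Real.rpow_pos_of_pos hq a)
    exact Real.rpow_le_rpow hq.le hw1 (by linarith)
  have heq : ((1 + t^2)/ν) ^ (-a) = ν ^ a * (1 + t^2) ^ (-a) := by
    rw [Real.div_rpow (by positivity) hν0.le, Real.rpow_neg (by positivity),
      Real.rpow_neg hν0.le, div_eq_mul_inv, inv_inv, mul_comm]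
  rw [Real.norm_eq_abs, Real.norm_eq_abs, abs_of_nonneg (Real.rpow_nonneg (wf_pos hν0).le _),
    abs_of_nonneg]
  · rw [heq] at key; exact key
  · positivity

lemma hasDerivAt_wf_rpow {c : ℝ} (hc : 1 ≤ c) (s : ℝ) :
    HasDerivAt (fun x : ℝ => c ^ (-x)) (-(Real.log c * c ^ (-s))) s := by
  have h := (Real.hasStrictDerivAt_const_rpow (by linarith : (0:ℝ) < c) (-s)).hasDerivAt
  have h2 := HasDerivAt.comp s h (hasDerivAt_neg s)
  refine h2.congr_deriv ?_
  ring

noncomputable def G0 (ν s : ℝ) : ℝ := ∫ t : ℝ, wf ν t ^ (-s)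
noncomputable def G1 (ν s : ℝ) : ℝ := ∫ t : ℝ, Real.log (wf ν t) * wf ν t ^ (-s)
noncomputable def G2 (ν s : ℝ) : ℝ := ∫ t : ℝ, (Real.log (wf ν t))^2 * wf ν t ^ (-s)

lemma meas_wf_rpow {ν : ℝ} (hν : 1 ≤ ν) (a : ℝ) (k : ℕ) :
    AEStronglyMeasurable (fun t : ℝ => (Real.log (wf ν t))^k * wf ν t ^ (-a)) volume := by
  have hν0 : (0:ℝ) < ν := by linarith
  apply Continuous.aestronglyMeasurable
  have h1 : Continuous fun t : ℝ => Real.log (wf ν t) :=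
    (cont_wf ν).log (fun t => (wf_pos (t := t) hν0).ne')
  exact (h1.pow k).mul ((cont_wf ν).rpow_const (fun t => Or.inl (wf_pos (t := t) hν0).ne'))

lemma ball_lower {x₀ x : ℝ} (hx₀ : 7/8 ≤ x₀) (hx : x ∈ Metric.ball x₀ (1/16)) :
    13/16 ≤ x := by
  have := abs_sub_lt_iff.mp (by simpa [Real.dist_eq] using hx)
  linarith [this.1, this.2]

lemma hasDerivAt_G0 {ν : ℝ} (hν : 1 ≤ ν) {x₀ : ℝ} (hx₀ : 7/8 ≤ x₀) :
    Integrable (fun t : ℝ => Real.log (wf ν t) * wf ν t ^ (-x₀)) ∧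
    HasDerivAt (G0 ν) (-(G1 ν x₀)) x₀ := by
  have hν0 : (0:ℝ) < ν := by linarith
  have key := hasDerivAt_integral_of_dominated_loc_of_deriv_le
    (𝕜 := ℝ) (μ := volume)
    (F := fun (x : ℝ) (t : ℝ) => wf ν t ^ (-x))
    (F' := fun (x : ℝ) (t : ℝ) => -(Real.log (wf ν t) * wf ν t ^ (-x)))
    (x₀ := x₀) (bound := fun t => 8 * wf ν t ^ (-(11/16 : ℝ)))
    (s := Metric.ball x₀ (1/16)) (Metric.ball_mem_nhds _ (by norm_num))
    (Filter.Eventually.of_forall (fun x => by simpa using meas_wf_rpow hν x 0))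
    (integrable_wf_rpow hν (by linarith))
    ((meas_wf_rpow hν x₀ 1).neg.congr (Filter.Eventually.of_forall (fun t => by simp)))
    (Filter.Eventually.of_forall (fun t => ?_))
    ((integrable_wf_rpow hν (by norm_num : (1:ℝ)/2 < 11/16)).const_mul 8)
    (Filter.Eventually.of_forall (fun t => ?_))
  · refine ⟨key.1.neg.congr (Filter.Eventually.of_forall (fun t => by simp)), ?_⟩
    have h2 := key.2
    have : (∫ t : ℝ, -(Real.log (wf ν t) * wf ν t ^ (-x₀))) = -(G1 ν x₀) := by
      rw [integral_neg]; rfl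
    rwa [this] at h2
  · -- bound
    intro x hx
    have hx13 := ball_lower hx₀ hx
    have hw1 := wf_one_le (ν := ν) (t := t) hν0
    have hlog := log_wf_nonneg (ν := ν) (t := t) hν0
    rw [norm_neg, Real.norm_eq_abs, abs_of_nonneg (by positivity)]
    have b1 : wf ν t ^ (-x) ≤ wf ν t ^ (-(13/16 : ℝ)) := wf_rpow_le hν0 hx13
    have b2 : Real.log (wf ν t) ≤ 8 * wf ν t ^ ((1:ℝ)/8) := log_le_rpow hw1
    have b3 : Real.log (wf ν t) * wf ν t ^ (-x) ≤
        (8 * wf ν t ^ ((1:ℝ)/8)) * wf ν t ^ (-(13/16 : ℝ)) := by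
      apply mul_le_mul b2 b1 (by positivity) (by positivity)
    calc Real.log (wf ν t) * wf ν t ^ (-x)
        ≤ (8 * wf ν t ^ ((1:ℝ)/8)) * wf ν t ^ (-(13/16 : ℝ)) := b3
      _ = 8 * wf ν t ^ (-(11/16 : ℝ)) := by
          rw [mul_assoc, ← Real.rpow_add (wf_pos hν0)]
          norm_num
  · -- differentiability
    intro x _
    exact hasDerivAt_wf_rpow (wf_one_le hν0) x

lemma hasDerivAt_G1 {ν : ℝ} (hν : 1 ≤ ν) {x₀ : ℝ} (hx₀ : 7/8 ≤ x₀) :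
    Integrable (fun t : ℝ => (Real.log (wf ν t))^2 * wf ν t ^ (-x₀)) ∧
    HasDerivAt (G1 ν) (-(G2 ν x₀)) x₀ := by
  have hν0 : (0:ℝ) < ν := by linarith
  have key := hasDerivAt_integral_of_dominated_loc_of_deriv_le
    (𝕜 := ℝ) (μ := volume)
    (F := fun (x : ℝ) (t : ℝ) => Real.log (wf ν t) * wf ν t ^ (-x))
    (F' := fun (x : ℝ) (t : ℝ) => -((Real.log (wf ν t))^2 * wf ν t ^ (-x)))
    (x₀ := x₀) (bound := fun t => 64 * wf ν t ^ (-(9/16 : ℝ)))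
    (s := Metric.ball x₀ (1/16)) (Metric.ball_mem_nhds _ (by norm_num))
    (Filter.Eventually.of_forall (fun x => by simpa using meas_wf_rpow hν x 1))
    ((hasDerivAt_G0 hν hx₀).1)
    ((meas_wf_rpow hν x₀ 2).neg.congr (Filter.Eventually.of_forall (fun t => by simp)))
    (Filter.Eventually.of_forall (fun t => ?_))
    ((integrable_wf_rpow hν (by norm_num : (1:ℝ)/2 < 9/16)).const_mul 64)
    (Filter.Eventually.of_forall (fun t => ?_))
  · refine ⟨key.1.neg.congr (Filter.Eventually.of_forall (fun t => by simp)), ?_⟩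
    have h2 := key.2
    have : (∫ t : ℝ, -((Real.log (wf ν t))^2 * wf ν t ^ (-x₀))) = -(G2 ν x₀) := by
      rw [integral_neg]; rfl
    rwa [this] at h2
  · intro x hx
    have hx13 := ball_lower hx₀ hx
    have hw1 := wf_one_le (ν := ν) (t := t) hν0
    have hlog := log_wf_nonneg (ν := ν) (t := t) hν0
    rw [norm_neg, Real.norm_eq_abs, abs_of_nonneg (by positivity)]
    have b1 : wf ν t ^ (-x) ≤ wf ν t ^ (-(13/16 : ℝ)) := wf_rpow_le hν0 hx13
    have b2 : (Real.log (wf ν t))^2 ≤ (8 * wf ν t ^ ((1:ℝ)/8))^2 := by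
      apply pow_le_pow_left₀ hlog (log_le_rpow hw1)
    have b3 : (Real.log (wf ν t))^2 * wf ν t ^ (-x) ≤
        (8 * wf ν t ^ ((1:ℝ)/8))^2 * wf ν t ^ (-(13/16 : ℝ)) :=
      mul_le_mul b2 b1 (by positivity) (by positivity)
    calc (Real.log (wf ν t))^2 * wf ν t ^ (-x)
        ≤ (8 * wf ν t ^ ((1:ℝ)/8))^2 * wf ν t ^ (-(13/16 : ℝ)) := b3
      _ = 64 * (wf ν t ^ ((1:ℝ)/8) * wf ν t ^ ((1:ℝ)/8) * wf ν t ^ (-(13/16 : ℝ))) := by ring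
      _ = 64 * wf ν t ^ (-(9/16 : ℝ)) := by
          rw [← Real.rpow_add (wf_pos hν0), ← Real.rpow_add (wf_pos hν0)]
          norm_num
  · intro x _
    have h := (hasDerivAt_wf_rpow (c := wf ν t) (wf_one_le hν0) x).const_mul (Real.log (wf ν t))
    refine h.congr_deriv ?_
    ring

lemma real_beta_formula {s : ℝ} (hs : 1/2 < s) :
    (∫ x in Ioo (0:ℝ) 1, x ^ (-(1/2) : ℝ) * (1-x) ^ (s - 3/2)) =
      Real.sqrt Real.pi * Real.Gamma (s - 1/2) / Real.Gamma s := by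
  have hs2 : (0:ℝ) < s - 1/2 := by linarith
  have hs0 : (0:ℝ) < s := by linarith
  -- complex beta identity
  have hbeta := Complex.Gamma_mul_Gamma_eq_betaIntegral
    (s := ((1:ℝ)/2 : ℂ)) (t := ((s - 1/2 : ℝ) : ℂ)) (by norm_num) (by simpa using hs2)
  have hsum : ((1:ℝ)/2 : ℂ) + ((s - 1/2 : ℝ) : ℂ) = (s : ℂ) := by push_cast; ring
  rw [hsum] at hbeta
  -- identify the beta integral with the real one
  have hint : Complex.betaIntegral ((1:ℝ)/2 : ℂ) ((s - 1/2 : ℝ) : ℂ) =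
      ((∫ x in (0:ℝ)..1, x ^ (-(1/2) : ℝ) * (1-x) ^ (s - 3/2) : ℝ) : ℂ) := by
    rw [Complex.betaIntegral]
    rw [← intervalIntegral.integral_ofReal]
    apply intervalIntegral.integral_congr
    intro x hx
    rw [Set.uIcc_of_le (by norm_num : (0:ℝ) ≤ 1)] at hx
    obtain ⟨hx0, hx1⟩ := hx
    have h1 : ((x ^ (-(1/2) : ℝ) : ℝ) : ℂ) = (x : ℂ) ^ (((1:ℝ)/2 : ℂ) - 1) := by
      rw [Complex.ofReal_cpow hx0]
      norm_num
    have h2 : (((1-x) ^ (s - 3/2) : ℝ) : ℂ) = (1 - (x:ℂ)) ^ (((s - 1/2 : ℝ) : ℂ) - 1) := by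
      rw [Complex.ofReal_cpow (by linarith)]
      push_cast
      ring_nf
    show (x:ℂ) ^ (((1:ℝ):ℂ) / 2 - 1) * (1 - (x:ℂ)) ^ (((s - 1/2 : ℝ):ℂ) - 1)
      = ((x ^ (-(1/2):ℝ) * (1 - x) ^ (s - 3/2) : ℝ) : ℂ)
    rw [Complex.ofReal_mul, h1, h2]
  rw [hint] at hbeta
  -- move to real
  have hG1 : Complex.Gamma ((1:ℝ)/2 : ℂ) = (Real.Gamma (1/2) : ℂ) := by
    rw [← Complex.Gamma_ofReal]; norm_num
  have hG2 : Complex.Gamma ((s - 1/2 : ℝ) : ℂ) = (Real.Gamma (s - 1/2) : ℂ) :=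
    Complex.Gamma_ofReal _
  have hG3 : Complex.Gamma (s : ℂ) = (Real.Gamma s : ℂ) := Complex.Gamma_ofReal _
  rw [hG1, hG2, hG3] at hbeta
  have hreal : Real.Gamma (1/2) * Real.Gamma (s - 1/2) =
      Real.Gamma s * ∫ x in (0:ℝ)..1, x ^ (-(1/2) : ℝ) * (1-x) ^ (s - 3/2) := by
    exact_mod_cast hbeta
  have hIoo : (∫ x in (0:ℝ)..1, x ^ (-(1/2) : ℝ) * (1-x) ^ (s - 3/2)) =
      ∫ x in Ioo (0:ℝ) 1, x ^ (-(1/2) : ℝ) * (1-x) ^ (s - 3/2) := by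
    rw [intervalIntegral.integral_of_le (by norm_num : (0:ℝ) ≤ 1),
      MeasureTheory.integral_Ioc_eq_integral_Ioo]
  rw [hIoo] at hreal
  rw [Real.Gamma_one_half_eq] at hreal
  have hGs : Real.Gamma s ≠ 0 := (Real.Gamma_pos_of_pos hs0).ne'
  field_simp at hreal ⊢
  linarith [hreal]

lemma subst_phi {s : ℝ} :
    (∫ x in Ioo (0:ℝ) 1, x ^ (-(1/2) : ℝ) * (1-x) ^ (s - 3/2)) =
      ∫ t in Ioi (0:ℝ), 2 * (1 + t^2) ^ (-s) := by
  set φ : ℝ → ℝ := fun t => t^2/(1+t^2) with hφ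
  have himg : φ '' Ioi (0:ℝ) = Ioo (0:ℝ) 1 := by
    ext x
    constructor
    · rintro ⟨t, ht, rfl⟩
      have ht0 : (0:ℝ) < t := ht
      have hA : (0:ℝ) < 1 + t^2 := by positivity
      constructor
      · simp only [hφ]; positivity
      · simp only [hφ]
        rw [div_lt_one hA]; nlinarith
    · rintro ⟨hx0, hx1⟩
      refine ⟨Real.sqrt (x/(1-x)), ?_, ?_⟩
      · have : (0:ℝ) < x/(1-x) := by
          apply div_pos hx0; linarith
        exact Real.sqrt_pos.mpr this
      · have h1x : (0:ℝ) < 1 - x := by linarith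
        have hq : (0:ℝ) ≤ x/(1-x) := by positivity
        simp only [hφ]
        rw [Real.sq_sqrt hq]
        have hne : (1:ℝ) - x ≠ 0 := by linarith
        have : 1 + x/(1-x) = 1/(1-x) := by field_simp; ring
        rw [this]
        field_simp
  have hder : ∀ t ∈ Ioi (0:ℝ), HasDerivWithinAt φ (2*t/(1+t^2)^2) (Ioi (0:ℝ)) t := by
    intro t _
    have hA : (1:ℝ) + t^2 ≠ 0 := by positivity
    have h1 : HasDerivAt (fun t : ℝ => t^2) (2*t) t := by
      simpa using hasDerivAt_pow 2 t
    have h2 : HasDerivAt (fun t : ℝ => 1 + t^2) (2*t) t := h1.const_add 1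
    have h3 := h1.div h2 hA
    have : (2*t*(1+t^2) - t^2*(2*t))/(1+t^2)^2 = 2*t/(1+t^2)^2 := by
      field_simp; ring
    rw [this] at h3
    exact h3.hasDerivWithinAt
  have hinj : InjOn φ (Ioi (0:ℝ)) := by
    intro a ha b hb hab
    simp only [hφ] at hab
    have ha0 : (0:ℝ) < a := ha
    have hb0 : (0:ℝ) < b := hb
    have hA : (0:ℝ) < 1 + a^2 := by positivity
    have hB : (0:ℝ) < 1 + b^2 := by positivity
    have h1 : a^2 * (1 + b^2) = b^2 * (1 + a^2) := by
      field_simp at hab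
      nlinarith [hab]
    have h2 : (a - b) * (a + b) = 0 := by nlinarith
    rcases mul_eq_zero.mp h2 with h | h
    · linarith
    · nlinarith
  have key := MeasureTheory.integral_image_eq_integral_abs_deriv_smul
    measurableSet_Ioi hder hinj (fun x => x ^ (-(1/2) : ℝ) * (1-x) ^ (s - 3/2))
  rw [himg] at key
  rw [key]
  apply setIntegral_congr_fun measurableSet_Ioi
  intro t ht
  have ht0 : (0:ℝ) < t := ht
  have hA : (0:ℝ) < 1 + t^2 := by positivity
  have hφt : φ t = t^2/(1+t^2) := rfl
  have h1mφ : 1 - φ t = (1+t^2)⁻¹ := by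
    rw [hφt]; field_simp; ring
  have e1 : (φ t) ^ (-(1/2) : ℝ) = t⁻¹ * (1+t^2) ^ ((1/2) : ℝ) := by
    rw [hφt, Real.div_rpow (sq_nonneg t) hA.le]
    rw [← Real.rpow_natCast t 2, ← Real.rpow_mul ht0.le]
    norm_num
    rw [Real.rpow_neg_one, Real.rpow_neg hA.le, div_inv_eq_mul]
  have e2 : ((1+t^2)⁻¹) ^ (s - 3/2) = (1+t^2) ^ ((3:ℝ)/2 - s) := by
    rw [← Real.rpow_neg_one (1+t^2), ← Real.rpow_mul hA.le,
      show (-1)*(s-3/2) = (3:ℝ)/2 - s by ring]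
  show |2 * t / (1 + t ^ 2) ^ 2| • (φ t ^ (-(1/2):ℝ) * (1 - φ t) ^ (s - 3/2))
    = 2 * (1 + t ^ 2) ^ (-s)
  rw [smul_eq_mul, h1mφ, e1, e2, abs_of_pos (by positivity : (0:ℝ) < 2*t/(1+t^2)^2)]
  rw [mul_assoc, ← Real.rpow_add hA, show (1:ℝ)/2 + ((3:ℝ)/2 - s) = 2 + (-s) by ring,
    Real.rpow_add hA, Real.rpow_two]
  have ht' : t ≠ 0 := ht0.ne'
  have hA' : (1+t^2) ≠ 0 := hA.ne'
  field_simp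

lemma integrable_one_add_sq_rpow {a : ℝ} (ha : 1/2 < a) :
    Integrable (fun x : ℝ => (1 + x^2) ^ (-a)) := by
  have h := integrable_wf_rpow (ν := 1) le_rfl ha
  have heq : (fun t : ℝ => wf 1 t ^ (-a)) = fun x : ℝ => (1 + x^2) ^ (-a) := by
    funext t; unfold wf; norm_num
  rwa [heq] at h

lemma even_integral {s : ℝ} (hs : 1/2 < s) :
    (∫ t : ℝ, (1 + t^2) ^ (-s)) = ∫ t in Ioi (0:ℝ), 2 * (1 + t^2) ^ (-s) := by
  have hint := integrable_one_add_sq_rpow hs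
  rw [← intervalIntegral.integral_Iic_add_Ioi (b := (0:ℝ)) hint.integrableOn hint.integrableOn]
  have h1 : (∫ t in Iic (0:ℝ), (1 + t^2) ^ (-s)) = ∫ t in Ioi (0:ℝ), (1 + t^2) ^ (-s) := by
    rw [show Iic (0:ℝ) = Iic (-0 : ℝ) by norm_num, ← integral_comp_neg_Ioi]
    apply setIntegral_congr_fun measurableSet_Ioi
    intro t _
    norm_num
  rw [h1, MeasureTheory.integral_const_mul]
  ring

lemma G0_eq_Hf {ν s : ℝ} (hν : 1 ≤ ν) (hs : 1/2 < s) : G0 ν s = Hf ν s := by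
  have hν0 : (0:ℝ) < ν := lt_of_lt_of_le one_pos hν
  have hsq : (0:ℝ) < Real.sqrt ν := Real.sqrt_pos.mpr hν0
  have hcomp : ∀ t : ℝ, wf ν t ^ (-s) =
      (fun y : ℝ => (1 + y^2) ^ (-s)) ((Real.sqrt ν)⁻¹ * t) := by
    intro t
    unfold wf
    congr 1
    rw [mul_pow, inv_pow, Real.sq_sqrt hν0.le]
    field_simp
  calc G0 ν s = ∫ t : ℝ, (fun y : ℝ => (1 + y^2) ^ (-s)) ((Real.sqrt ν)⁻¹ * t) := by
        unfold G0; exact integral_congr_ae (Filter.Eventually.of_forall hcomp)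
    _ = |Real.sqrt ν| • ∫ y : ℝ, (1 + y^2) ^ (-s) :=
        MeasureTheory.Measure.integral_comp_inv_mul_left (fun y : ℝ => (1 + y^2) ^ (-s)) _
    _ = Real.sqrt ν * ∫ y : ℝ, (1 + y^2) ^ (-s) := by
        rw [abs_of_pos hsq, smul_eq_mul]
    _ = Real.sqrt ν * ∫ t in Ioi (0:ℝ), 2 * (1 + t^2) ^ (-s) := by rw [even_integral hs]
    _ = Real.sqrt ν * ∫ x in Ioo (0:ℝ) 1, x ^ (-(1/2) : ℝ) * (1-x) ^ (s - 3/2) := by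
        rw [subst_phi]
    _ = Real.sqrt ν * (Real.sqrt Real.pi * Real.Gamma (s - 1/2) / Real.Gamma s) := by
        rw [real_beta_formula hs]
    _ = Hf ν s := by
        unfold Hf
        rw [Real.sqrt_mul Real.pi_pos.le]
        ring

theorem second_moment_and_variance_n_log_one_add_tsq (n : ℕ) (hn : 2 ≤ n)
    (ν₁ : ℝ) (hν₁ : ν₁ = (n : ℝ) - 1)
    (m₁ m₂ : ℝ) (hm₁ : m₁ = (n : ℝ) * Dfun ν₁)
    (hm₂ : m₂ = (n : ℝ) ^ 2 * ((Dfun ν₁) ^ 2 - 2 * deriv Dfun ν₁)) :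
    (∫ t : ℝ, ((n : ℝ) * Real.log (1 + t ^ 2 / ν₁)) ^ 2 * tDensity ν₁ t) = m₂ ∧
    (∫ t : ℝ, ((n : ℝ) * Real.log (1 + t ^ 2 / ν₁) - m₁) ^ 2 * tDensity ν₁ t) = m₂ - m₁ ^ 2 := by
  have hn2 : (2:ℝ) ≤ (n:ℝ) := by exact_mod_cast hn
  have hν : (1:ℝ) ≤ ν₁ := by rw [hν₁]; linarith
  have hν0 : (0:ℝ) < ν₁ := by linarith
  set s₀ : ℝ := (ν₁ + 1)/2 with hs₀def
  have hs₀ : (1:ℝ) ≤ s₀ := by rw [hs₀def]; linarith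
  have hs₀' : (1:ℝ)/2 < s₀ := by linarith
  have h78 : (7:ℝ)/8 ≤ s₀ := by linarith
  have h2s : 2*s₀ - 1 = ν₁ := by rw [hs₀def]; ring
  -- eventual equality of G0 and Hf
  have hev : ∀ s : ℝ, 1/2 < s → (G0 ν₁) =ᶠ[nhds s] (Hf ν₁) := by
    intro s hs
    filter_upwards [Ioi_mem_nhds hs] with y hy
    exact G0_eq_Hf hν hy
  -- first derivative identity
  have hfirst : ∀ s : ℝ, 7/8 ≤ s → G1 ν₁ s = -(H1f ν₁ s) := by
    intro s hs
    have hs2 : (1:ℝ)/2 < s := by linarith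
    have hG' : HasDerivAt (Hf ν₁) (-(G1 ν₁ s)) s :=
      ((hasDerivAt_G0 hν hs).2).congr_of_eventuallyEq (hev s hs2).symm
    have huniq := hG'.unique (hasDerivAt_Hf hs2)
    have h2 : H1f ν₁ s = Hf ν₁ s * (-(Dfun (2*s - 1))) := rfl
    rw [h2]
    linarith [huniq]
  -- second derivative identity at s₀
  have hevent : G1 ν₁ =ᶠ[nhds s₀] (fun s => -(H1f ν₁ s)) := by
    filter_upwards [Ioi_mem_nhds (show (7:ℝ)/8 < s₀ by linarith)] with y hy
    exact hfirst y (le_of_lt hy)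
  have hG2 : G2 ν₁ s₀ = Hf ν₁ s₀ * ((Dfun ν₁)^2 - 2 * deriv Dfun ν₁) := by
    have hH1' : HasDerivAt (fun s => -(H1f ν₁ s))
        (-(Hf ν₁ s₀ * ((Dfun (2*s₀-1))^2 - 2 * deriv Dfun (2*s₀-1)))) s₀ :=
      (hasDerivAt_H1f hs₀).neg
    have hG1' : HasDerivAt (fun s => -(H1f ν₁ s)) (-(G2 ν₁ s₀)) s₀ :=
      ((hasDerivAt_G1 hν h78).2).congr_of_eventuallyEq hevent.symm
    have := hG1'.unique hH1'
    rw [h2s] at this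
    linarith [this]
  have hG1 : G1 ν₁ s₀ = Hf ν₁ s₀ * Dfun ν₁ := by
    rw [hfirst s₀ h78]
    unfold H1f
    rw [h2s]
    ring
  have hG0 : G0 ν₁ s₀ = Hf ν₁ s₀ := G0_eq_Hf hν hs₀'
  -- normalization
  set K : ℝ := Kfun ν₁ with hKdef
  have hK : K * Hf ν₁ s₀ = 1 := by
    have hs12 : s₀ - 1/2 = ν₁/2 := by rw [hs₀def]; ring
    have hπν : (0:ℝ) < Real.pi * ν₁ := by positivity
    have hΓ1 : (0:ℝ) < Real.Gamma ((ν₁+1)/2) := Real.Gamma_pos_of_pos (by linarith)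
    have hΓ2 : (0:ℝ) < Real.Gamma (ν₁/2) := Real.Gamma_pos_of_pos (by linarith)
    rw [hKdef]
    unfold Kfun Hf
    rw [hs12, ← hs₀def]
    have hsq : (0:ℝ) < Real.sqrt (Real.pi * ν₁) := Real.sqrt_pos.mpr hπν
    field_simp
  -- integrability
  have I0 : Integrable (fun t : ℝ => wf ν₁ t ^ (-s₀)) := integrable_wf_rpow hν hs₀'
  have I1 : Integrable (fun t : ℝ => Real.log (wf ν₁ t) * wf ν₁ t ^ (-s₀)) :=
    (hasDerivAt_G0 hν h78).1
  have I2 : Integrable (fun t : ℝ => (Real.log (wf ν₁ t))^2 * wf ν₁ t ^ (-s₀)) :=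
    (hasDerivAt_G1 hν h78).1
  have hdens : ∀ t : ℝ, tDensity ν₁ t = K * wf ν₁ t ^ (-s₀) := by
    intro t
    rfl
  constructor
  · -- second moment
    have hpt : ∀ t : ℝ, ((n : ℝ) * Real.log (1 + t ^ 2 / ν₁)) ^ 2 * tDensity ν₁ t =
        ((n:ℝ)^2 * K) * ((Real.log (wf ν₁ t))^2 * wf ν₁ t ^ (-s₀)) := by
      intro t
      rw [hdens t]
      show ((n : ℝ) * Real.log (wf ν₁ t)) ^ 2 * (K * wf ν₁ t ^ (-s₀)) = _
      ring
    rw [integral_congr_ae (Filter.Eventually.of_forall hpt), MeasureTheory.integral_const_mul]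
    have : (∫ t : ℝ, (Real.log (wf ν₁ t))^2 * wf ν₁ t ^ (-s₀)) = G2 ν₁ s₀ := rfl
    rw [this, hG2, hm₂]
    calc (n:ℝ)^2 * K * (Hf ν₁ s₀ * ((Dfun ν₁)^2 - 2 * deriv Dfun ν₁))
        = (n:ℝ)^2 * ((K * Hf ν₁ s₀) * ((Dfun ν₁)^2 - 2 * deriv Dfun ν₁)) := by ring
      _ = (n:ℝ)^2 * ((Dfun ν₁)^2 - 2 * deriv Dfun ν₁) := by rw [hK]; ring
  · -- variance
    have hpt : ∀ t : ℝ, ((n : ℝ) * Real.log (1 + t ^ 2 / ν₁) - m₁) ^ 2 * tDensity ν₁ t =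
        ((n:ℝ)^2 * K) * ((Real.log (wf ν₁ t))^2 * wf ν₁ t ^ (-s₀))
          - (2 * m₁ * (n:ℝ) * K) * (Real.log (wf ν₁ t) * wf ν₁ t ^ (-s₀))
          + (m₁^2 * K) * (wf ν₁ t ^ (-s₀)) := by
      intro t
      rw [hdens t]
      show ((n : ℝ) * Real.log (wf ν₁ t) - m₁) ^ 2 * (K * wf ν₁ t ^ (-s₀)) = _
      ring
    rw [integral_congr_ae (Filter.Eventually.of_forall hpt)]
    have hsub : Integrable (fun t : ℝ =>
        ((n:ℝ)^2 * K) * ((Real.log (wf ν₁ t))^2 * wf ν₁ t ^ (-s₀))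
          - (2 * m₁ * (n:ℝ) * K) * (Real.log (wf ν₁ t) * wf ν₁ t ^ (-s₀))) :=
      (I2.const_mul _).sub (I1.const_mul _)
    have eadd : (∫ t : ℝ,
        (((n:ℝ)^2 * K) * ((Real.log (wf ν₁ t))^2 * wf ν₁ t ^ (-s₀))
          - (2 * m₁ * (n:ℝ) * K) * (Real.log (wf ν₁ t) * wf ν₁ t ^ (-s₀))
          + (m₁^2 * K) * (wf ν₁ t ^ (-s₀)))) =
        (∫ t : ℝ, (((n:ℝ)^2 * K) * ((Real.log (wf ν₁ t))^2 * wf ν₁ t ^ (-s₀))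
          - (2 * m₁ * (n:ℝ) * K) * (Real.log (wf ν₁ t) * wf ν₁ t ^ (-s₀))))
          + ∫ t : ℝ, (m₁^2 * K) * (wf ν₁ t ^ (-s₀)) :=
      MeasureTheory.integral_add hsub (I0.const_mul _)
    have esub : (∫ t : ℝ, (((n:ℝ)^2 * K) * ((Real.log (wf ν₁ t))^2 * wf ν₁ t ^ (-s₀))
          - (2 * m₁ * (n:ℝ) * K) * (Real.log (wf ν₁ t) * wf ν₁ t ^ (-s₀)))) =
        (∫ t : ℝ, ((n:ℝ)^2 * K) * ((Real.log (wf ν₁ t))^2 * wf ν₁ t ^ (-s₀)))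
          - ∫ t : ℝ, (2 * m₁ * (n:ℝ) * K) * (Real.log (wf ν₁ t) * wf ν₁ t ^ (-s₀)) :=
      MeasureTheory.integral_sub (I2.const_mul _) (I1.const_mul _)
    rw [eadd, esub, MeasureTheory.integral_const_mul, MeasureTheory.integral_const_mul,
      MeasureTheory.integral_const_mul]
    have e2 : (∫ t : ℝ, (Real.log (wf ν₁ t))^2 * wf ν₁ t ^ (-s₀)) = G2 ν₁ s₀ := rfl
    have e1 : (∫ t : ℝ, Real.log (wf ν₁ t) * wf ν₁ t ^ (-s₀)) = G1 ν₁ s₀ := rfl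
    have e0 : (∫ t : ℝ, wf ν₁ t ^ (-s₀)) = G0 ν₁ s₀ := rfl
    rw [e2, e1, e0, hG2, hG1, hG0]
    have h1 : (n:ℝ)^2 * K * (Hf ν₁ s₀ * ((Dfun ν₁)^2 - 2 * deriv Dfun ν₁)) = m₂ := by
      rw [hm₂]
      calc (n:ℝ)^2 * K * (Hf ν₁ s₀ * ((Dfun ν₁)^2 - 2 * deriv Dfun ν₁))
          = (n:ℝ)^2 * ((K * Hf ν₁ s₀) * ((Dfun ν₁)^2 - 2 * deriv Dfun ν₁)) := by ring
        _ = (n:ℝ)^2 * ((Dfun ν₁)^2 - 2 * deriv Dfun ν₁) := by rw [hK]; ring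
    have h2 : 2 * m₁ * (n:ℝ) * K * (Hf ν₁ s₀ * Dfun ν₁) = 2 * m₁^2 := by
      rw [hm₁]
      calc 2 * ((n:ℝ) * Dfun ν₁) * (n:ℝ) * K * (Hf ν₁ s₀ * Dfun ν₁)
          = 2 * ((n:ℝ) * Dfun ν₁)^2 * (K * Hf ν₁ s₀) := by ring
        _ = 2 * ((n:ℝ) * Dfun ν₁)^2 := by rw [hK]; ring
    have h3 : m₁^2 * K * Hf ν₁ s₀ = m₁^2 := by
      calc m₁^2 * K * Hf ν₁ s₀ = m₁^2 * (K * Hf ν₁ s₀) := by ring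
        _ = m₁^2 := by rw [hK]; ring
    rw [h1, h3]
    rw [hm₁] at h2 ⊢
    linarith [h2]
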